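/- Let N be a positive integer, A an N×N real symmetric positive definite matrix, and B ∈ ℝᴺ. Then ∫_{ℝᴺ} exp(-Xᵀ A X + 2i Bᵀ X) dX = √(πᴺ / det A) · exp(-Bᵀ A⁻¹ B). -/

import Mathlib

open Complex MeasureTheory Matrix

set_option maxHeartbeats 1000000 in
theorem multivariate_gaussian_integral (N : ℕ) (hN : 0 < N)
    (A : Matrix (Fin N) (Fin N) ℝ) (hA : A.IsSymm) (hApd : A.PosDef) (B : Fin N → ℝ) :
    (∫ X : Fin N → ℝ,
        Complex.exp (-(∑ j : Fin N, ∑ k : Fin N, (A j k : ℂ) * X j * X k) +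
          2 * Complex.I * ∑ j : Fin N, (B j : ℂ) * X j)) =
      (Real.sqrt (Real.pi ^ N / A.det) : ℂ) *
        Complex.exp (-(∑ j : Fin N, ∑ k : Fin N, ((A⁻¹) j k : ℂ) * B j * B k)) := by
  classical
  have hAps : A.PosSemidef := hApd.posSemidef
  open scoped MatrixOrder in
  set S : Matrix (Fin N) (Fin N) ℝ := CFC.sqrt A with hSdef
  open scoped MatrixOrder in
  have hSps : S.PosSemidef := (CFC.sqrt_nonneg A).posSemidef
  open scoped MatrixOrder in
  have hSS : S * S = A := CFC.sqrt_mul_sqrt_self A hAps.nonneg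
  have hdetA : 0 < A.det := hApd.det_pos
  have h2 : S.det * S.det = A.det := by rw [← Matrix.det_mul, hSS]
  have hSnn : 0 ≤ S.det := by
    rw [hSps.1.det_eq_prod_eigenvalues]
    push_cast
    exact Finset.prod_nonneg fun i _ => hSps.eigenvalues_nonneg i
  have hSdetpos : 0 < S.det := hSnn.lt_of_ne (by intro h; nlinarith)
  have hSsymm : Sᵀ = S := by
    rw [← Matrix.conjTranspose_eq_transpose_of_trivial]; exact hSps.1
  have hSunit : IsUnit S.det := hSdetpos.ne'.isUnit
  have hSinv : S * S⁻¹ = 1 := Matrix.mul_nonsing_inv S hSunit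
  have hAinv : A⁻¹ = S⁻¹ * S⁻¹ := by rw [← hSS, Matrix.mul_inv_rev]
  have hSinvsymm : (S⁻¹)ᵀ = S⁻¹ := by rw [Matrix.transpose_nonsing_inv, hSsymm]
  set C : Fin N → ℝ := S⁻¹ *ᵥ B with hC
  -- real identities
  have key : ∀ (M : Matrix (Fin N) (Fin N) ℝ) (x z : Fin N → ℝ),
      ∑ j, ∑ k, M j k * x j * z k = x ⬝ᵥ (M *ᵥ z) := by
    intro M x z
    simp_rw [dotProduct, Matrix.mulVec, dotProduct, Finset.mul_sum]
    exact Finset.sum_congr rfl fun j _ => Finset.sum_congr rfl fun k _ => by ring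
  have real1 : ∀ y : Fin N → ℝ,
      ∑ j, ∑ k, A j k * (S⁻¹ *ᵥ y) j * (S⁻¹ *ᵥ y) k = ∑ i, y i ^ 2 := by
    intro y
    rw [key]
    rw [Matrix.mulVec_mulVec, ← hSS, Matrix.mul_assoc, hSinv, Matrix.mul_one,
      Matrix.dotProduct_mulVec]
    have : (S⁻¹ *ᵥ y) ᵥ* S = y := by
      rw [← Matrix.mulVec_transpose, hSsymm, Matrix.mulVec_mulVec, hSinv, Matrix.one_mulVec]
    rw [this, dotProduct]
    exact Finset.sum_congr rfl fun i _ => (sq (y i)).symm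
  have real2 : ∀ y : Fin N → ℝ, ∑ j, B j * (S⁻¹ *ᵥ y) j = ∑ i, C i * y i := by
    intro y
    have : B ⬝ᵥ (S⁻¹ *ᵥ y) = C ⬝ᵥ y := by
      rw [Matrix.dotProduct_mulVec, ← Matrix.mulVec_transpose, hSinvsymm]
    simpa [dotProduct] using this
  have real3 : ∑ i, C i ^ 2 = ∑ j, ∑ k, A⁻¹ j k * B j * B k := by
    have hdot : B ⬝ᵥ (A⁻¹ *ᵥ B) = C ⬝ᵥ C := by
      rw [hAinv, ← Matrix.mulVec_mulVec, Matrix.dotProduct_mulVec, ← Matrix.mulVec_transpose,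
        hSinvsymm]
    have h1 : C ⬝ᵥ C = ∑ i, C i ^ 2 := by
      rw [dotProduct]; exact Finset.sum_congr rfl fun i _ => (sq (C i)).symm
    rw [← h1, ← hdot, key]
  -- change of variables
  set f : (Fin N → ℝ) → ℂ := fun X =>
    Complex.exp (-(∑ j : Fin N, ∑ k : Fin N, (A j k : ℂ) * X j * X k) +
      2 * Complex.I * ∑ j : Fin N, (B j : ℂ) * X j) with hf
  have hfc : Continuous f := by fun_prop
  set T : (Fin N → ℝ) →ₗ[ℝ] (Fin N → ℝ) := Matrix.toLin' S⁻¹ with hT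
  have hTdet : LinearMap.det T = (S.det)⁻¹ := by
    rw [hT, LinearMap.det_toLin', Matrix.det_nonsing_inv, Ring.inverse_eq_inv']
  have hTdetne : LinearMap.det T ≠ 0 := by
    rw [hTdet]; exact inv_ne_zero hSdetpos.ne'
  have hmap : Measure.map T volume =
      ENNReal.ofReal |(LinearMap.det T)⁻¹| • volume :=
    Real.map_linearMap_volume_pi_eq_smul_volume_pi hTdetne
  have hcov : ∫ y, f (T y) = S.det • ∫ x, f x := by
    rw [← MeasureTheory.integral_map (T.continuous_of_finiteDimensional).aemeasurable
      hfc.aestronglyMeasurable, hmap, integral_smul_measure]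
    rw [hTdet, inv_inv, abs_of_pos hSdetpos, ENNReal.toReal_ofReal hSnn]
  -- compute the transformed integral
  have hTy : ∀ y, T y = S⁻¹ *ᵥ y := fun y => Matrix.toLin'_apply S⁻¹ y
  have hexp : ∀ y : Fin N → ℝ, f (T y) =
      Complex.exp (-(∑ i, (1 : ℂ) * (y i : ℂ) ^ 2) + ∑ i, (2 * Complex.I * C i) * y i) := by
    intro y
    simp only [hf]
    rw [hTy]
    refine congrArg Complex.exp ?_
    have e1 : (∑ j, ∑ k, (A j k : ℂ) * ((S⁻¹ *ᵥ y) j : ℝ) * ((S⁻¹ *ᵥ y) k : ℝ)) =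
        ((∑ j, ∑ k, A j k * (S⁻¹ *ᵥ y) j * (S⁻¹ *ᵥ y) k : ℝ) : ℂ) := by push_cast; rfl
    have e2 : (∑ j, (B j : ℂ) * ((S⁻¹ *ᵥ y) j : ℝ)) =
        ((∑ j, B j * (S⁻¹ *ᵥ y) j : ℝ) : ℂ) := by push_cast; rfl
    rw [e1, e2, real1, real2]
    push_cast
    rw [Finset.mul_sum]
    congr 1
    · congr 1
      exact Finset.sum_congr rfl fun i _ => by ring
    · exact Finset.sum_congr rfl fun i _ => by ring
  have hgauss : ∫ y : Fin N → ℝ, f (T y) =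
      ((Real.sqrt Real.pi : ℂ)) ^ N * Complex.exp (-(∑ i, (C i : ℂ) ^ 2)) := by
    simp_rw [hexp]
    rw [GaussianFourier.integral_cexp_neg_sum_mul_add (fun i => by norm_num)
      (fun i => 2 * Complex.I * C i)]
    have hsq : ((Real.pi : ℂ) / 1) ^ (1 / 2 : ℂ) = (Real.sqrt Real.pi : ℂ) := by
      rw [div_one, Real.sqrt_eq_rpow, Complex.ofReal_cpow Real.pi_nonneg]
      norm_num
    simp_rw [hsq]
    rw [Finset.prod_mul_distrib, Finset.prod_const, Finset.card_univ, Fintype.card_fin,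
      ← Complex.exp_sum]
    congr 2
    rw [← Finset.sum_neg_distrib]
    refine Finset.sum_congr rfl fun i _ => ?_
    have : (2 * Complex.I * (C i : ℂ)) ^ 2 = -4 * (C i : ℂ) ^ 2 := by
      rw [mul_pow, mul_pow, Complex.I_sq]; ring
    rw [this]; ring
  -- assemble
  have hintf : ∫ x, f x = (S.det : ℂ)⁻¹ * ∫ y, f (T y) := by
    rw [hcov, Complex.real_smul, ← mul_assoc,
      inv_mul_cancel₀ (by exact_mod_cast hSdetpos.ne'), one_mul]
  have hconst : ((Real.sqrt (Real.pi ^ N / A.det) : ℝ) : ℂ) =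
      (S.det : ℂ)⁻¹ * (Real.sqrt Real.pi : ℂ) ^ N := by
    have hreal : Real.sqrt (Real.pi ^ N / A.det) = (S.det)⁻¹ * (Real.sqrt Real.pi) ^ N := by
      have hs : Real.sqrt (Real.pi ^ N) = Real.sqrt Real.pi ^ N := by
        rw [show Real.pi ^ N = (Real.sqrt Real.pi ^ N) ^ 2 by
              rw [← pow_mul, mul_comm, pow_mul, Real.sq_sqrt Real.pi_nonneg],
          Real.sqrt_sq (by positivity)]
      rw [← h2, Real.sqrt_div (pow_nonneg Real.pi_nonneg N), Real.sqrt_mul_self hSnn, hs]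
      ring
    rw [hreal]; push_cast; ring
  calc ∫ x, f x = (S.det : ℂ)⁻¹ * ((Real.sqrt Real.pi : ℂ) ^ N *
        Complex.exp (-(∑ i, (C i : ℂ) ^ 2))) := by rw [hintf, hgauss]
    _ = _ := by
        rw [hconst, mul_assoc]
        refine congrArg _ (congrArg _ (congrArg Complex.exp (congrArg Neg.neg ?_)))
        rw [show (∑ i, ((C i : ℂ)) ^ 2) = ((∑ i, C i ^ 2 : ℝ) : ℂ) by push_cast; rfl, real3]
        push_cast
        rfl
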